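/- For any 0 < λ₁ < λ₂, every λ₂-quasi-geometrically infinitely divisible distribution on [0,∞) is also λ₁-quasi-geometrically infinitely divisible; that is, the class G_{λ₂} is contained in G_{λ₁}. -/

import Mathlib

open MeasureTheory Real Set

noncomputable section

/-- Convolution of two pmfs on ℕ. -/
def seqConv (f g : ℕ → ℝ) : ℕ → ℝ := fun n => ∑ k ∈ Finset.range (n + 1), f k * g (n - k)

/-- k-fold convolution power of a pmf on ℕ. -/
def seqConvPow (f : ℕ → ℝ) : ℕ → ℕ → ℝ
  | 0 => fun n => if n = 0 then 1 else 0
  | k + 1 => seqConv f (seqConvPow f k)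

/-- `f` is a probability mass function on ℕ. -/
def IsPMF (f : ℕ → ℝ) : Prop := (∀ n, 0 ≤ f n) ∧ ∑' n, f n = 1

/-- pmf of a geometric(p) random sum `X₁ + ⋯ + X_{N_p}` (N_p ≥ 1) of iid variables with pmf f. -/
def geomCompound (p : ℝ) (f : ℕ → ℝ) : ℕ → ℝ :=
  fun n => ∑' k : ℕ, p * (1 - p) ^ k * seqConvPow f (k + 1) n

/-- A distribution on ℕ is geometrically infinitely divisible. -/
def GID (q : ℕ → ℝ) : Prop :=
  ∀ p ∈ Set.Ioo (0 : ℝ) 1, ∃ f : ℕ → ℝ, IsPMF f ∧ ∀ n, q n = geomCompound p f n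

/-- Convolution of measures on ℝ (distribution of the sum of independent rv's). -/
def mconv (μ ν : Measure ℝ) : Measure ℝ :=
  Measure.map (fun x : ℝ × ℝ => x.1 + x.2) (μ.prod ν)

/-- k-fold convolution power of a measure on ℝ. -/
def mpow (μ : Measure ℝ) : ℕ → Measure ℝ
  | 0 => Measure.dirac 0
  | k + 1 => mconv μ (mpow μ k)

/-- A distribution on [0,∞) is geometrically infinitely divisible: for every p ∈ (0,1)
it is the distribution of a geometric(p) random sum of iid nonnegative rv's. -/
def GIDM (μ : Measure ℝ) : Prop :=
  ∀ p ∈ Set.Ioo (0 : ℝ) 1, ∃ ν : Measure ℝ, IsProbabilityMeasure ν ∧ ν (Set.Iio 0) = 0 ∧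
    μ = Measure.sum (fun k : ℕ => (ENNReal.ofReal (p * (1 - p) ^ k)) • mpow ν (k + 1))

/-- Laplace–Stieltjes transform of a measure on ℝ. -/
def lst (μ : Measure ℝ) (u : ℝ) : ℝ := ∫ x, Real.exp (-(u * x)) ∂μ

/-- pmf of the λ-Poisson mixture with mixing distribution μ. -/
def pmix (l : ℝ) (μ : Measure ℝ) (n : ℕ) : ℝ :=
  ∫ x, (l * x) ^ n * Real.exp (-(l * x)) / (n.factorial : ℝ) ∂μ

/-- μ is λ-quasi-geometrically infinitely divisible: its λ-Poisson mixture is g.i.d. -/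
def QGID (l : ℝ) (μ : Measure ℝ) : Prop := GID (pmix l μ)

/-- K(τ) = -φ'(τ)/φ(τ)² where φ is the LST of μ. -/
def Kfun (μ : Measure ℝ) (τ : ℝ) : ℝ := -(deriv (lst μ) τ) / (lst μ τ) ^ 2

/-- G is a probability generating function (on |z| ≤ 1). -/
def IsPGF (G : ℝ → ℝ) : Prop :=
  ∃ f : ℕ → ℝ, IsPMF f ∧ ∀ z : ℝ, |z| ≤ 1 → G z = ∑' n, f n * z ^ n

end

open MeasureTheory Real Set
open scoped ENNReal
noncomputable section
namespace Stmt5Aux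


def Kr (a : ℝ) (N n : ℕ) : ℝ := (N.choose n : ℝ) * a ^ n * (1 - a) ^ (N - n)

lemma Kr_nonneg {a : ℝ} (h0 : 0 ≤ a) (h1 : a ≤ 1) (N n : ℕ) : 0 ≤ Kr a N n := by
  have : (0:ℝ) ≤ 1 - a := by linarith
  unfold Kr; positivity

lemma Kr_eq_zero {N n : ℕ} (h : N < n) (a : ℝ) : Kr a N n = 0 := by
  unfold Kr; rw [Nat.choose_eq_zero_of_lt h]; simp

lemma Kr_rowsum (a : ℝ) (N : ℕ) : ∑ n ∈ Finset.range (N+1), Kr a N n = 1 := by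
  have h := add_pow a (1 - a) N
  rw [show a + (1-a) = 1 by ring, one_pow] at h
  conv_rhs => rw [h]
  exact Finset.sum_congr rfl (fun i _ => by unfold Kr; ring)

lemma Kr_le_one {a : ℝ} (h0 : 0 ≤ a) (h1 : a ≤ 1) (N n : ℕ) : Kr a N n ≤ 1 := by
  rcases lt_or_ge N n with h | h
  · rw [Kr_eq_zero h]; norm_num
  · calc Kr a N n ≤ ∑ m ∈ Finset.range (N+1), Kr a N m :=
        Finset.single_le_sum (fun m _ => Kr_nonneg h0 h1 N m) (Finset.mem_range.mpr (by omega))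
    _ = 1 := Kr_rowsum a N

lemma Kr_conv (a : ℝ) (A B n : ℕ) :
    ∑ i ∈ Finset.range (n+1), Kr a A i * Kr a B (n-i) = Kr a (A+B) n := by
  have h : ∀ i ∈ Finset.range (n+1),
      Kr a A i * Kr a B (n-i)
        = ((A.choose i * B.choose (n-i) : ℕ) : ℝ) * (a ^ n * (1-a) ^ (A+B-n)) := by
    intro i hi
    simp only [Finset.mem_range, Nat.lt_succ_iff] at hi
    by_cases hA : i ≤ A
    · by_cases hB : n - i ≤ B
      · have e1 : i + (n - i) = n := by omega
        have e2 : (A - i) + (B - (n-i)) = A + B - n := by omega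
        unfold Kr
        push_cast
        calc (A.choose i : ℝ) * a ^ i * (1-a) ^ (A-i) * ((B.choose (n-i) : ℝ) * a ^ (n-i) * (1-a) ^ (B-(n-i)))
            = ((A.choose i : ℝ) * (B.choose (n-i):ℝ)) * ((a ^ i * a ^ (n-i)) * ((1-a) ^ (A-i) * (1-a) ^ (B-(n-i)))) := by ring
          _ = ((A.choose i : ℝ) * (B.choose (n-i):ℝ)) * (a ^ n * (1-a) ^ (A+B-n)) := by
              rw [← pow_add, ← pow_add, e1, e2]
          _ = _ := by ring
      · have hz : B.choose (n - i) = 0 := Nat.choose_eq_zero_of_lt (by omega)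
        simp [Kr, hz]
    · have hz : A.choose i = 0 := Nat.choose_eq_zero_of_lt (by omega)
      simp [Kr, hz]
  rw [Finset.sum_congr rfl h, ← Finset.sum_mul]
  have hv : ∑ i ∈ Finset.range (n+1), ((A.choose i * B.choose (n-i) : ℕ) : ℝ)
      = (((A+B).choose n : ℕ) : ℝ) := by
    rw [← Nat.cast_sum]
    congr 1
    rw [Nat.add_choose_eq A B n, Finset.Nat.sum_antidiagonal_eq_sum_range_succ_mk]
  rw [hv]
  unfold Kr; ring




def eK (a : ℝ) (N n : ℕ) : ℝ≥0∞ := ENNReal.ofReal (Kr a N n)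

def eConv (u v : ℕ → ℝ≥0∞) (n : ℕ) : ℝ≥0∞ := ∑ k ∈ Finset.range (n+1), u k * v (n-k)

def ePow (u : ℕ → ℝ≥0∞) : ℕ → ℕ → ℝ≥0∞
  | 0 => fun n => if n = 0 then 1 else 0
  | k+1 => eConv u (ePow u k)

def eThin (a : ℝ) (u : ℕ → ℝ≥0∞) (n : ℕ) : ℝ≥0∞ := ∑' N, eK a N n * u N

lemma eK_eq_zero {N n : ℕ} (h : N < n) (a : ℝ) : eK a N n = 0 := by
  rw [eK, Kr_eq_zero h, ENNReal.ofReal_zero]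

lemma eK_conv {a : ℝ} (h0 : 0 ≤ a) (h1 : a ≤ 1) (A B n : ℕ) :
    ∑ i ∈ Finset.range (n+1), eK a A i * eK a B (n-i) = eK a (A+B) n := by
  rw [eK, ← Kr_conv a A B n, ENNReal.ofReal_sum_of_nonneg
    (fun i _ => mul_nonneg (Kr_nonneg h0 h1 _ _) (Kr_nonneg h0 h1 _ _))]
  exact Finset.sum_congr rfl fun i _ =>
    (ENNReal.ofReal_mul (Kr_nonneg h0 h1 _ _)).symm

lemma tsum_shift (h : ℕ → ℝ≥0∞) (n : ℕ) (h0 : ∀ N, N < n → h N = 0) :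
    ∑' N, h N = ∑' m, h (m + n) := by
  refine (Function.Injective.tsum_eq (g := fun m => m + n) (add_left_injective n) ?_).symm
  intro N hN
  rcases le_or_gt n N with hle | hlt
  · exact ⟨N - n, by show N - n + n = N; omega⟩
  · exact absurd (h0 N hlt) hN

lemma eThin_conv {a : ℝ} (h0 : 0 ≤ a) (h1 : a ≤ 1) (u v : ℕ → ℝ≥0∞) :
    eThin a (eConv u v) = eConv (eThin a u) (eThin a v) := by
  funext n
  have hL : eThin a (eConv u v) n
      = ∑' A, ∑' B, eK a (A+B) n * (u A * v B) := by
    rw [eThin]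
    have step1 : ∀ N, eK a N n * eConv u v N
        = ∑' k, if k ≤ N then eK a N n * (u k * v (N - k)) else 0 := by
      intro N
      rw [eConv, Finset.mul_sum]
      rw [tsum_eq_sum (s := Finset.range (N+1))
        (fun k hk => if_neg (by simp only [Finset.mem_range] at hk; omega))]
      exact (Finset.sum_congr rfl fun k hk =>
        if_pos (by simp only [Finset.mem_range] at hk; omega)).symm
    calc ∑' N, eK a N n * eConv u v N
        = ∑' N, ∑' k, if k ≤ N then eK a N n * (u k * v (N - k)) else 0 := by
          exact tsum_congr step1
      _ = ∑' k, ∑' N, if k ≤ N then eK a N n * (u k * v (N - k)) else 0 :=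
          ENNReal.tsum_comm
      _ = ∑' A, ∑' B, eK a (A+B) n * (u A * v B) := by
          refine tsum_congr fun k => ?_
          rw [tsum_shift _ k (fun N hN => if_neg (by omega))]
          refine tsum_congr fun m => ?_
          rw [if_pos (Nat.le_add_left k m), Nat.add_sub_cancel, Nat.add_comm m k]
  have hR : eConv (eThin a u) (eThin a v) n
      = ∑' A, ∑' B, eK a (A+B) n * (u A * v B) := by
    have hmul : ∀ k j, eThin a u k * eThin a v j
        = ∑' A, ∑' B, (eK a A k * eK a B j) * (u A * v B) := by
      intro k j
      rw [eThin, eThin, ← ENNReal.tsum_mul_right]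
      refine tsum_congr fun A => ?_
      rw [← ENNReal.tsum_mul_left]
      refine tsum_congr fun B => ?_
      ring
    rw [eConv]
    calc ∑ k ∈ Finset.range (n+1), eThin a u k * eThin a v (n-k)
        = ∑ k ∈ Finset.range (n+1), ∑' A, ∑' B,
            (eK a A k * eK a B (n-k)) * (u A * v B) :=
          Finset.sum_congr rfl fun k _ => hmul k (n-k)
      _ = ∑' A, ∑ k ∈ Finset.range (n+1), ∑' B,
            (eK a A k * eK a B (n-k)) * (u A * v B) :=
          (Summable.tsum_finsetSum (fun _ _ => ENNReal.summable)).symm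
      _ = ∑' A, ∑' B, ∑ k ∈ Finset.range (n+1),
            (eK a A k * eK a B (n-k)) * (u A * v B) := by
          exact tsum_congr fun A => (Summable.tsum_finsetSum (fun _ _ => ENNReal.summable)).symm
      _ = ∑' A, ∑' B, eK a (A+B) n * (u A * v B) := by
          refine tsum_congr fun A => tsum_congr fun B => ?_
          rw [← Finset.sum_mul, eK_conv h0 h1]
  rw [hL, hR]

lemma eThin_delta {a : ℝ} (h0 : 0 ≤ a) :
    eThin a (fun n => if n = 0 then 1 else 0) = fun n => if n = 0 then 1 else 0 := by
  funext n
  rw [eThin]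
  rw [tsum_eq_single 0 (fun N hN => by simp [hN])]
  rcases Nat.eq_zero_or_pos n with h | h
  · subst h
    simp [eK, Kr]
  · simp [eK_eq_zero h a, Nat.pos_iff_ne_zero.mp h]

lemma eThin_pow {a : ℝ} (h0 : 0 ≤ a) (h1 : a ≤ 1) (u : ℕ → ℝ≥0∞) :
    ∀ k, eThin a (ePow u k) = ePow (eThin a u) k := by
  intro k
  induction k with
  | zero => exact eThin_delta h0
  | succ k ih => rw [ePow, ePow, eThin_conv h0 h1, ih]





def E (f : ℕ → ℝ) (n : ℕ) : ℝ≥0∞ := ENNReal.ofReal (f n)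

lemma pmf_summable {f : ℕ → ℝ} (hf : IsPMF f) : Summable f := by
  by_contra h
  have := hf.2
  rw [tsum_eq_zero_of_not_summable h] at this
  norm_num at this

lemma spow_nonneg {f : ℕ → ℝ} (hf : ∀ n, 0 ≤ f n) : ∀ k n, 0 ≤ seqConvPow f k n := by
  intro k
  induction k with
  | zero => intro n; unfold seqConvPow; split <;> norm_num
  | succ k ih =>
      intro n
      unfold seqConvPow seqConv
      exact Finset.sum_nonneg fun i _ => mul_nonneg (hf i) (ih (n - i))

lemma spow_le_one {f : ℕ → ℝ} (hf : IsPMF f) : ∀ k n, seqConvPow f k n ≤ 1 := by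
  intro k
  induction k with
  | zero => intro n; unfold seqConvPow; split <;> norm_num
  | succ k ih =>
      intro n
      calc (seqConvPow f (k+1)) n = ∑ i ∈ Finset.range (n+1), f i * seqConvPow f k (n - i) := rfl
        _ ≤ ∑ i ∈ Finset.range (n+1), f i :=
            Finset.sum_le_sum fun i _ => mul_le_of_le_one_right (hf.1 i) (ih (n - i))
        _ ≤ ∑' i, f i := (pmf_summable hf).sum_le_tsum _ (fun i _ => hf.1 i)
        _ = 1 := hf.2

lemma E_conv {f g : ℕ → ℝ} (hf : ∀ n, 0 ≤ f n) (hg : ∀ n, 0 ≤ g n) (n : ℕ) :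
    ENNReal.ofReal (seqConv f g n) = eConv (E f) (E g) n := by
  rw [seqConv, eConv, ENNReal.ofReal_sum_of_nonneg fun i _ => mul_nonneg (hf i) (hg (n-i))]
  exact Finset.sum_congr rfl fun i _ => ENNReal.ofReal_mul (hf i)

lemma E_pow {f : ℕ → ℝ} (hf : ∀ n, 0 ≤ f n) : ∀ k n,
    ENNReal.ofReal (seqConvPow f k n) = ePow (E f) k n := by
  intro k
  induction k with
  | zero =>
      intro n
      unfold seqConvPow ePow
      split <;> simp
  | succ k ih =>
      intro n
      have hEk : (fun m => ENNReal.ofReal (seqConvPow f k m)) = ePow (E f) k := funext ih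
      rw [show seqConvPow f (k+1) = seqConv f (seqConvPow f k) from rfl,
        E_conv hf (spow_nonneg hf k) n,
        show ePow (E f) (k+1) = eConv (E f) (ePow (E f) k) from rfl, ← hEk]
      rfl

lemma geom_summable {f : ℕ → ℝ} (hf : IsPMF f) {p : ℝ} (hp : p ∈ Set.Ioo (0:ℝ) 1) (n : ℕ) :
    Summable (fun k => p * (1 - p) ^ k * seqConvPow f (k + 1) n) := by
  obtain ⟨hp0, hp1⟩ := hp
  refine Summable.of_nonneg_of_le
    (fun k => mul_nonneg (mul_nonneg hp0.le (pow_nonneg (by linarith) k)) (spow_nonneg hf.1 _ n))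
    (fun k => ?_)
    (((summable_geometric_of_lt_one (r := 1 - p) (by linarith) (by linarith)).mul_left p))
  exact mul_le_of_le_one_right (mul_nonneg hp0.le (pow_nonneg (by linarith) k)) (spow_le_one hf _ n)

lemma ofReal_geomCompound {f : ℕ → ℝ} (hf : IsPMF f) {p : ℝ} (hp : p ∈ Set.Ioo (0:ℝ) 1) (n : ℕ) :
    ENNReal.ofReal (geomCompound p f n)
      = ∑' k, ENNReal.ofReal p * ENNReal.ofReal (1 - p) ^ k * ePow (E f) (k+1) n := by
  obtain ⟨hp0, hp1⟩ := hp
  rw [geomCompound, ENNReal.ofReal_tsum_of_nonneg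
    (fun k => mul_nonneg (mul_nonneg hp0.le (pow_nonneg (by linarith) k)) (spow_nonneg hf.1 _ n))
    (geom_summable hf ⟨hp0, hp1⟩ n)]
  refine tsum_congr fun k => ?_
  rw [ENNReal.ofReal_mul (mul_nonneg hp0.le (pow_nonneg (by linarith) k)),
    ENNReal.ofReal_mul hp0.le, ENNReal.ofReal_pow (by linarith), E_pow hf.1]

lemma geomCompound_nonneg {f : ℕ → ℝ} (hf : ∀ m, 0 ≤ f m) {p : ℝ} (hp : p ∈ Set.Ioo (0:ℝ) 1)
    (n : ℕ) : 0 ≤ geomCompound p f n := by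
  obtain ⟨hp0, hp1⟩ := hp
  exact tsum_nonneg fun k =>
    mul_nonneg (mul_nonneg hp0.le (pow_nonneg (by linarith) k)) (spow_nonneg hf _ n)

lemma eK_rowsum {a : ℝ} (h0 : 0 ≤ a) (h1 : a ≤ 1) (N : ℕ) : ∑' n, eK a N n = 1 := by
  rw [tsum_eq_sum (s := Finset.range (N+1))
    (fun n hn => eK_eq_zero (by simp only [Finset.mem_range] at hn; omega) a)]
  rw [show (eK a N) = fun n => ENNReal.ofReal (Kr a N n) from rfl,
    ← ENNReal.ofReal_sum_of_nonneg (fun i _ => Kr_nonneg h0 h1 N i), Kr_rowsum]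
  simp

lemma E_tsum_one {f : ℕ → ℝ} (hf : IsPMF f) : ∑' n, E f n = 1 := by
  rw [show (E f) = fun n => ENNReal.ofReal (f n) from rfl,
    ← ENNReal.ofReal_tsum_of_nonneg hf.1 (pmf_summable hf), hf.2]
  simp

lemma eThin_le_one {a : ℝ} (h0 : 0 ≤ a) (h1 : a ≤ 1) {f : ℕ → ℝ} (hf : IsPMF f) (n : ℕ) :
    eThin a (E f) n ≤ 1 := by
  calc eThin a (E f) n ≤ ∑' N, E f N := by
        refine ENNReal.tsum_le_tsum fun N => ?_
        exact mul_le_of_le_one_left zero_le (ENNReal.ofReal_le_one.mpr (Kr_le_one h0 h1 N n))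
    _ = 1 := E_tsum_one hf

lemma eThin_tsum_one {a : ℝ} (h0 : 0 ≤ a) (h1 : a ≤ 1) {f : ℕ → ℝ} (hf : IsPMF f) :
    ∑' n, eThin a (E f) n = 1 := by
  rw [show (fun n => eThin a (E f) n) = fun n => ∑' N, eK a N n * E f N from rfl]
  rw [ENNReal.tsum_comm]
  calc ∑' N, ∑' n, eK a N n * E f N = ∑' N, (∑' n, eK a N n) * E f N := by
        exact tsum_congr fun N => ENNReal.tsum_mul_right
    _ = ∑' N, E f N := by
        refine tsum_congr fun N => by rw [eK_rowsum h0 h1, one_mul]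
    _ = 1 := E_tsum_one hf





/-- the Poisson weight -/
def phi (l : ℝ) (n : ℕ) (x : ℝ) : ℝ := (l * x) ^ n * Real.exp (-(l * x)) / (n.factorial : ℝ)

lemma phi_cont (l : ℝ) (n : ℕ) : Continuous (phi l n) := by
  unfold phi; fun_prop

lemma phi_nonneg {l x : ℝ} (hl : 0 ≤ l) (hx : 0 ≤ x) (n : ℕ) : 0 ≤ phi l n x := by
  unfold phi; positivity

lemma phi_le_one {l x : ℝ} (hl : 0 ≤ l) (hx : 0 ≤ x) (n : ℕ) : phi l n x ≤ 1 := by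
  unfold phi
  have ht : 0 ≤ l * x := mul_nonneg hl hx
  have h1 : (l*x) ^ n / n.factorial ≤ Real.exp (l*x) := Real.pow_div_factorial_le_exp _ ht n
  have h2 : Real.exp (-(l*x)) * Real.exp (l*x) = 1 := by
    rw [← Real.exp_add]; simp
  calc (l * x) ^ n * Real.exp (-(l * x)) / (n.factorial : ℝ)
      = ((l*x)^n / n.factorial) * Real.exp (-(l*x)) := by ring
    _ ≤ Real.exp (l*x) * Real.exp (-(l*x)) := by
        exact mul_le_mul_of_nonneg_right h1 (Real.exp_nonneg _)
    _ = 1 := by rw [mul_comm]; exact h2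

/-- algebraic term identity -/
lemma key_real {l₁ l₂ : ℝ} (h1 : 0 < l₁) (h2 : l₁ < l₂) (x : ℝ) (n m : ℕ) :
    Kr (l₁/l₂) (m+n) n * phi l₂ (m+n) x
      = ((l₁*x)^n * Real.exp (-(l₂*x)) / (n.factorial : ℝ)) * (((l₂-l₁)*x)^m / (m.factorial : ℝ)) := by
  have hl2 : (0:ℝ) < l₂ := lt_trans h1 h2
  have ha : l₁/l₂ * l₂ = l₁ := div_mul_cancel₀ l₁ (ne_of_gt hl2)
  have hb : (1 - l₁/l₂) * l₂ = l₂ - l₁ := by field_simp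
  have hfac : ((m+n).factorial : ℝ)
      = ((m+n).choose n : ℝ) * (m.factorial : ℝ) * (n.factorial : ℝ) := by
    exact_mod_cast (congrArg (Nat.cast (R := ℝ)) (Nat.add_choose_mul_factorial_mul_factorial m n)).symm
  have e2 : (l₁/l₂)^n * (l₂*x)^n = (l₁*x)^n := by
    rw [← mul_pow, show l₁/l₂ * (l₂ * x) = l₁ * x by field_simp]
  have e3 : (1 - l₁/l₂)^m * (l₂*x)^m = ((l₂-l₁)*x)^m := by
    rw [← mul_pow, show (1 - l₁/l₂) * (l₂ * x) = (l₂ - l₁) * x by field_simp]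
  have key : (l₁/l₂)^n * (1 - l₁/l₂)^m * (l₂*x)^(m+n) = (l₁*x)^n * ((l₂-l₁)*x)^m := by
    rw [pow_add]
    calc (l₁/l₂)^n * (1 - l₁/l₂)^m * ((l₂*x)^m * (l₂*x)^n)
        = ((l₁/l₂)^n * (l₂*x)^n) * ((1-l₁/l₂)^m * (l₂*x)^m) := by ring
      _ = (l₁*x)^n * ((l₂-l₁)*x)^m := by rw [e2, e3]
  have hnn : (n.factorial : ℝ) ≠ 0 := Nat.cast_ne_zero.mpr (Nat.factorial_ne_zero _)
  have hnm : (m.factorial : ℝ) ≠ 0 := Nat.cast_ne_zero.mpr (Nat.factorial_ne_zero _)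
  have hch : (((m+n).choose n : ℕ) : ℝ) ≠ 0 :=
    Nat.cast_ne_zero.mpr ((Nat.choose_pos (Nat.le_add_left n m)).ne')
  unfold Kr phi
  rw [Nat.add_sub_cancel, hfac]
  set C := (((m+n).choose n : ℕ) : ℝ)
  set E := Real.exp (-(l₂*x))
  calc (C * (l₁/l₂)^n * (1 - l₁/l₂)^m) * ((l₂*x)^(m+n) * E / (C * (m.factorial:ℝ) * (n.factorial:ℝ)))
      = C * (((l₁/l₂)^n * (1 - l₁/l₂)^m * (l₂*x)^(m+n)) * E) / (C * (m.factorial:ℝ) * (n.factorial:ℝ)) := by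
        ring
    _ = C * (((l₁*x)^n * ((l₂-l₁)*x)^m) * E) / (C * (m.factorial:ℝ) * (n.factorial:ℝ)) := by rw [key]
    _ = ((l₁*x)^n * E / (n.factorial : ℝ)) * (((l₂-l₁)*x)^m / (m.factorial : ℝ)) := by
        field_simp


lemma ae_nonneg (μ : Measure ℝ) (hsupp : μ (Set.Iio 0) = 0) : ∀ᵐ x ∂μ, 0 ≤ x := by
  rw [ae_iff]
  convert hsupp using 2
  ext x; simp [not_le, Set.mem_Iio]

lemma pointwise_id {l₁ l₂ : ℝ} (h1 : 0 < l₁) (h2 : l₁ < l₂) {x : ℝ} (hx : 0 ≤ x) (n : ℕ) :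
    ∑' N, eK (l₁/l₂) N n * ENNReal.ofReal (phi l₂ N x) = ENNReal.ofReal (phi l₁ n x) := by
  have hl2 : (0:ℝ) < l₂ := lt_trans h1 h2
  have ha0 : 0 ≤ l₁/l₂ := by positivity
  have ha1 : l₁/l₂ ≤ 1 := by rw [div_le_one hl2]; linarith
  have hs : 0 ≤ (l₂ - l₁) * x := mul_nonneg (by linarith) hx
  rw [tsum_shift _ n (fun N hN => by rw [eK_eq_zero hN, zero_mul])]
  have hterm : ∀ m, eK (l₁/l₂) (m+n) n * ENNReal.ofReal (phi l₂ (m+n) x)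
      = ENNReal.ofReal (((l₁*x)^n * Real.exp (-(l₂*x)) / (n.factorial : ℝ))
          * (((l₂-l₁)*x)^m / (m.factorial : ℝ))) := by
    intro m
    rw [eK, ← ENNReal.ofReal_mul (Kr_nonneg ha0 ha1 _ _), key_real h1 h2 x n m]
  rw [tsum_congr hterm]
  set C := (l₁*x)^n * Real.exp (-(l₂*x)) / (n.factorial : ℝ) with hC
  have hCnn : 0 ≤ C :=
    div_nonneg (mul_nonneg (pow_nonneg (mul_nonneg h1.le hx) n) (Real.exp_nonneg _))
      (Nat.cast_nonneg _)
  have htermnn : ∀ m : ℕ, 0 ≤ C * (((l₂-l₁)*x)^m / (m.factorial : ℝ)) := fun m =>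
    mul_nonneg hCnn (div_nonneg (pow_nonneg hs m) (Nat.cast_nonneg _))
  have hsum : Summable (fun m : ℕ => C * (((l₂-l₁)*x)^m / (m.factorial : ℝ))) :=
    (Real.summable_pow_div_factorial _).mul_left C
  rw [← ENNReal.ofReal_tsum_of_nonneg htermnn hsum]
  congr 1
  rw [tsum_mul_left]
  have hexp : ∑' m : ℕ, ((l₂-l₁)*x)^m / (m.factorial : ℝ) = Real.exp ((l₂-l₁)*x) := by
    rw [Real.exp_eq_exp_ℝ, NormedSpace.exp_eq_tsum_div]
  rw [hexp, hC]
  have hmul : Real.exp (-(l₂*x)) * Real.exp ((l₂-l₁)*x) = Real.exp (-(l₁*x)) := by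
    rw [← Real.exp_add]; ring_nf
  unfold phi
  calc (l₁*x)^n * Real.exp (-(l₂*x)) / (n.factorial : ℝ) * Real.exp ((l₂-l₁)*x)
      = (l₁*x)^n * (Real.exp (-(l₂*x)) * Real.exp ((l₂-l₁)*x)) / (n.factorial : ℝ) := by ring
    _ = (l₁*x)^n * Real.exp (-(l₁*x)) / (n.factorial : ℝ) := by rw [hmul]

lemma pmix_nonneg (μ : Measure ℝ) (hsupp : μ (Set.Iio 0) = 0) {l : ℝ} (hl : 0 < l) (n : ℕ) :
    0 ≤ pmix l μ n :=
  integral_nonneg_of_ae ((ae_nonneg μ hsupp).mono (fun x hx => phi_nonneg hl.le hx n))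

lemma phi_integrable (μ : Measure ℝ) [IsProbabilityMeasure μ] (hsupp : μ (Set.Iio 0) = 0)
    {l : ℝ} (hl : 0 < l) (n : ℕ) : Integrable (phi l n) μ := by
  refine Integrable.mono' (integrable_const 1) (phi_cont l n).aestronglyMeasurable ?_
  exact (ae_nonneg μ hsupp).mono fun x hx => by
    rw [Real.norm_eq_abs, abs_of_nonneg (phi_nonneg hl.le hx n)]
    exact phi_le_one hl.le hx n

lemma ofReal_pmix (μ : Measure ℝ) [IsProbabilityMeasure μ] (hsupp : μ (Set.Iio 0) = 0)
    {l : ℝ} (hl : 0 < l) (n : ℕ) :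
    ENNReal.ofReal (pmix l μ n) = ∫⁻ x, ENNReal.ofReal (phi l n x) ∂μ :=
  ofReal_integral_eq_lintegral_ofReal (phi_integrable μ hsupp hl n)
    ((ae_nonneg μ hsupp).mono (fun x hx => phi_nonneg hl.le hx n))

lemma ofReal_pmix_eq (μ : Measure ℝ) [IsProbabilityMeasure μ] (hsupp : μ (Set.Iio 0) = 0)
    {l₁ l₂ : ℝ} (h1 : 0 < l₁) (h2 : l₁ < l₂) (n : ℕ) :
    ENNReal.ofReal (pmix l₁ μ n) = ∑' N, eK (l₁/l₂) N n * ENNReal.ofReal (pmix l₂ μ N) := by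
  have hl2 : (0:ℝ) < l₂ := lt_trans h1 h2
  rw [ofReal_pmix μ hsupp h1 n]
  have step : ∫⁻ x, ENNReal.ofReal (phi l₁ n x) ∂μ
      = ∫⁻ x, ∑' N, eK (l₁/l₂) N n * ENNReal.ofReal (phi l₂ N x) ∂μ :=
    lintegral_congr_ae ((ae_nonneg μ hsupp).mono fun x hx => (pointwise_id h1 h2 hx n).symm)
  rw [step, lintegral_tsum
    (fun N => ((phi_cont l₂ N).measurable.ennreal_ofReal.const_mul _).aemeasurable)]
  refine tsum_congr fun N => ?_
  rw [lintegral_const_mul _ (phi_cont l₂ N).measurable.ennreal_ofReal,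
    ofReal_pmix μ hsupp hl2 N]


end Stmt5Aux
end

/-- For 0 < λ₁ < λ₂, every λ₂-q.g.i.d. distribution on [0,∞)
is λ₁-q.g.i.d. -/
theorem stmt5 (μ : Measure ℝ) [IsProbabilityMeasure μ] (hsupp : μ (Set.Iio 0) = 0)
    (l₁ l₂ : ℝ) (h₁ : 0 < l₁) (h₂ : l₁ < l₂) :
    QGID l₂ μ → QGID l₁ μ := by
  open Stmt5Aux in
  intro hq p hp
  obtain ⟨f, hf, hfe⟩ := hq p hp
  have hl2 : (0:ℝ) < l₂ := lt_trans h₁ h₂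
  set a := l₁ / l₂ with haa
  have ha0 : 0 ≤ a := by positivity
  have ha1 : a ≤ 1 := by rw [haa, div_le_one hl2]; linarith
  set F := E f with hF
  set g : ℕ → ℝ := fun n => (eThin a F n).toReal with hg
  have hfin : ∀ n, eThin a F n ≠ ⊤ := fun n =>
    ne_top_of_le_ne_top ENNReal.one_ne_top (eThin_le_one ha0 ha1 hf n)
  have hEg : E g = eThin a F := funext fun n => ENNReal.ofReal_toReal (hfin n)
  have hgpmf : IsPMF g := by
    constructor
    · intro n; exact ENNReal.toReal_nonneg
    · have h1 : ∑' n, g n = (∑' n, eThin a F n).toReal := (ENNReal.tsum_toReal_eq hfin).symm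
      rw [h1, eThin_tsum_one ha0 ha1 hf, ENNReal.toReal_one]
  refine ⟨g, hgpmf, fun n => ?_⟩
  have hnn1 : 0 ≤ pmix l₁ μ n := pmix_nonneg μ hsupp h₁ n
  have hnn2 : 0 ≤ geomCompound p g n := geomCompound_nonneg hgpmf.1 hp n
  have hOR : ENNReal.ofReal (pmix l₁ μ n) = ENNReal.ofReal (geomCompound p g n) := by
    calc ENNReal.ofReal (pmix l₁ μ n)
        = ∑' N, eK a N n * ENNReal.ofReal (pmix l₂ μ N) := ofReal_pmix_eq μ hsupp h₁ h₂ n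
      _ = ∑' N, eK a N n * ∑' k, ENNReal.ofReal p * ENNReal.ofReal (1-p) ^ k
            * ePow F (k+1) N := by
          refine tsum_congr fun N => ?_
          rw [hfe N, ofReal_geomCompound hf hp N]
      _ = ∑' k, ENNReal.ofReal p * ENNReal.ofReal (1-p) ^ k * eThin a (ePow F (k+1)) n := by
          calc ∑' N, eK a N n * ∑' k, ENNReal.ofReal p * ENNReal.ofReal (1-p) ^ k
                * ePow F (k+1) N
              = ∑' N, ∑' k, eK a N n * (ENNReal.ofReal p * ENNReal.ofReal (1-p) ^ k
                * ePow F (k+1) N) := tsum_congr fun N => ENNReal.tsum_mul_left.symm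
            _ = ∑' k, ∑' N, eK a N n * (ENNReal.ofReal p * ENNReal.ofReal (1-p) ^ k
                * ePow F (k+1) N) := ENNReal.tsum_comm
            _ = ∑' k, ENNReal.ofReal p * ENNReal.ofReal (1-p) ^ k
                * eThin a (ePow F (k+1)) n := by
                refine tsum_congr fun k => ?_
                rw [eThin, ← ENNReal.tsum_mul_left]
                exact tsum_congr fun N => by ring
      _ = ∑' k, ENNReal.ofReal p * ENNReal.ofReal (1-p) ^ k * ePow (eThin a F) (k+1) n := by
          exact tsum_congr fun k => by rw [eThin_pow ha0 ha1 F (k+1)]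
      _ = ENNReal.ofReal (geomCompound p g n) := by
          rw [ofReal_geomCompound hgpmf hp n, hEg]
  exact (ENNReal.ofReal_eq_ofReal_iff hnn1 hnn2).mp hOR
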